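/- If A ⊆ ω^ω is weakly captured at κ in the sense of clubs (condition (2)), then A admits a weak capturing term: the assignment Ȧ = { (p, τ) : f_τ⁻¹(A) ∩ σ^ω is comeager below p in σ^ω for a club of σ ∈ [κ]^ω } satisfies: for comeager many g ∈ σ^ω (for club many σ), the evaluation of Ȧ by g computes A correctly on the reals coded, i.e., for comeager many g, f_τ(g) ∈ A iff some initial segment p of g has (p,τ) ∈ Ȧ. -/

import Mathlib

open Set

/-- The basic open set of sequences in `κ^ω` extending the finite sequence `p ∈ κ^{<ω}`. -/
def Np {κ : Type*} (p : List κ) : Set (ℕ → κ) :=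
  {x | ∀ i : Fin p.length, x i.1 = p.get i}

/-- The initial segment `x↾n` of `x ∈ κ^ω`. -/
def seg {κ : Type*} (x : ℕ → κ) (n : ℕ) : List κ :=
  List.ofFn fun i : Fin n => x i.1

/-- `D ⊆ κ^{<ω}` is dense: every condition has an extension in `D`. -/
def DenseCond {κ : Type*} (D : Set (List κ)) : Prop :=
  ∀ p : List κ, ∃ q ∈ D, p <+: q

/-- The subspace `σ^ω ⊆ κ^ω`. -/
abbrev SeqIn {κ : Type*} (σ : Set κ) : Type _ := {x : ℕ → κ // ∀ n, x n ∈ σ}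

/-- `B ∩ σ^ω` is meager below `p` in the space `σ^ω`. -/
def MeagerBelowIn {κ : Type*} [TopologicalSpace κ] (σ : Set κ) (B : Set (ℕ → κ))
    (p : List κ) : Prop :=
  IsMeagre (Subtype.val ⁻¹' (B ∩ Np p) : Set (SeqIn σ))

/-- `B ∩ σ^ω` is comeager below `p` in the space `σ^ω`. -/
def ComeagerBelowIn {κ : Type*} [TopologicalSpace κ] (σ : Set κ) (B : Set (ℕ → κ))
    (p : List κ) : Prop :=
  IsMeagre (Subtype.val ⁻¹' (Np p \ B) : Set (SeqIn σ))

/-- `C` is a club in `[κ]^ω`. -/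
def IsClubIn {κ : Type*} (C : Set (Set κ)) : Prop :=
  (∀ σ ∈ C, σ.Countable) ∧
  (∀ a : Set κ, a.Countable → ∃ σ ∈ C, a ⊆ σ) ∧
  (∀ s : ℕ → Set κ, (∀ n, s n ∈ C) → Monotone s → (⋃ n, s n) ∈ C)

section Lemmas
variable {κ : Type*}

lemma seg_length (x : ℕ → κ) (n : ℕ) : (seg x n).length = n := List.length_ofFn

lemma seg_getElem (x : ℕ → κ) (n i : ℕ) (h : i < (seg x n).length) : (seg x n)[i] = x i := by
  simp [seg]

lemma mem_Np_seg (x : ℕ → κ) (n : ℕ) : x ∈ Np (seg x n) := by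
  intro i
  rw [List.get_eq_getElem, seg_getElem]

lemma seg_eq_of_mem_Np {x : ℕ → κ} {p : List κ} (h : x ∈ Np p) : seg x p.length = p := by
  apply List.ext_getElem (by simp [seg_length])
  intro i h1 h2
  rw [seg_getElem]
  simpa using h ⟨i, h2⟩

lemma isOpen_Np [TopologicalSpace κ] [DiscreteTopology κ] (p : List κ) : IsOpen (Np p) := by
  have : Np p = ⋂ i : Fin p.length, (fun x : ℕ → κ => x i.1) ⁻¹' {p.get i} := by
    ext x; simp [Np]
  rw [this]
  exact isOpen_iInter_of_finite fun i =>
    (continuous_apply i.1).isOpen_preimage _ (isOpen_discrete _)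

lemma countable_lists {σ : Set κ} (hσ : σ.Countable) :
    {p : List κ | ∀ a ∈ p, a ∈ σ}.Countable := by
  haveI := hσ.to_subtype
  have hsub : {p : List κ | ∀ a ∈ p, a ∈ σ} ⊆ Set.range (List.map (Subtype.val : σ → κ)) := by
    intro p hp
    refine ⟨p.attach.map (fun a => ⟨a.1, hp a.1 a.2⟩), ?_⟩
    rw [List.map_map]
    simp
  exact (Set.countable_range _).mono hsub

lemma isMeagre_iUnion' {X : Type*} [TopologicalSpace X] {ι : Sort*} [Countable ι]
    {s : ι → Set X} (hs : ∀ i, IsMeagre (s i)) : IsMeagre (⋃ i, s i) := by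
  rw [IsMeagre, compl_iUnion]
  exact countable_iInter_mem.2 hs

lemma isClubIn_countables : IsClubIn {σ : Set κ | σ.Countable} :=
  ⟨fun _ h => h, fun a ha => ⟨a, ha, subset_rfl⟩, fun s hs _ => Set.countable_iUnion hs⟩

lemma exists_stage {s : ℕ → Set κ} (hmono : Monotone s) :
    ∀ p : List κ, (∀ a ∈ p, a ∈ ⋃ n, s n) → ∃ N, ∀ a ∈ p, a ∈ s N := by
  intro p
  induction p with
  | nil => exact fun _ => ⟨0, by simp⟩
  | cons a q ih =>
    intro h
    obtain ⟨N, hN⟩ := ih fun b hb => h b (List.mem_cons_of_mem _ hb)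
    obtain ⟨M, hM⟩ := Set.mem_iUnion.1 (h a List.mem_cons_self)
    refine ⟨max N M, fun b hb => ?_⟩
    rcases List.mem_cons.1 hb with rfl | hb
    · exact hmono (le_max_right N M) hM
    · exact hmono (le_max_left N M) (hN b hb)

lemma club_union_cofinal {E : Set (Set κ)} (hE : IsClubIn E) (s : ℕ → Set κ)
    (hmono : Monotone s) (h : ∀ m, ∃ k, m ≤ k ∧ s k ∈ E) : (⋃ n, s n) ∈ E := by
  classical
  choose kk h1 h2 using h
  let k' : ℕ → ℕ := fun m => Nat.rec (kk 0) (fun _ ih => kk (ih + 1)) m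
  have hk'step : ∀ m, k' m + 1 ≤ k' (m + 1) := fun m => h1 (k' m + 1)
  have hk'ge : ∀ m, m ≤ k' m := by
    intro m
    induction m with
    | zero => exact Nat.zero_le _
    | succ m ih => exact le_trans (Nat.succ_le_succ ih) (hk'step m)
  have hk'mem : ∀ m, s (k' (m + 1)) ∈ E := fun m => h2 (k' m + 1)
  have heq : (⋃ n, s n) = ⋃ m, s (k' (m + 1)) := by
    apply Set.Subset.antisymm
    · exact Set.iUnion_mono' fun n => ⟨n, hmono (le_trans (Nat.le_succ n) (hk'ge (n+1)))⟩
    · exact Set.iUnion_mono' fun m => ⟨k' (m + 1), subset_rfl⟩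
  rw [heq]
  refine hE.2.2 _ hk'mem ?_
  refine monotone_nat_of_le_succ fun m => hmono ?_
  exact le_trans (Nat.le_succ _) (hk'step (m+1))

end Lemmas

section Lemmas2
variable {κ : Type*}

lemma club_inter_cofinal (E : List κ → Set (Set κ)) (hE : ∀ p, IsClubIn (E p))
    {I : Set (List κ)} (hI : I.Countable) {a : Set κ} (ha : a.Countable) :
    ∃ σ : Set κ, a ⊆ σ ∧ σ.Countable ∧ ∀ p ∈ I, σ ∈ E p := by
  classical
  obtain ⟨g₀, hg₀⟩ := Set.countable_iff_exists_subset_range.1 (hI.insert [])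
  set g : ℕ → List κ := fun k => g₀ (Nat.unpair k).1 with hg
  have step : ∀ (s : Set κ), s.Countable → ∀ k : ℕ,
      ∃ t : Set κ, t.Countable ∧ s ⊆ t ∧ t ∈ E (g k) := by
    intro s hs k
    obtain ⟨t, ht, hst⟩ := (hE (g k)).2.1 s hs
    exact ⟨t, (hE (g k)).1 t ht, hst, ht⟩
  choose t ht1 ht2 ht3 using step
  let ρ : ℕ → {s : Set κ // s.Countable} := fun k =>
    Nat.rec ⟨a, ha⟩ (fun k ih => ⟨t ih.1 ih.2 k, ht1 ih.1 ih.2 k⟩) k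
  have hρstep : ∀ k, (ρ k).1 ⊆ (ρ (k + 1)).1 := fun k => ht2 (ρ k).1 (ρ k).2 k
  have hρmem : ∀ k, (ρ (k + 1)).1 ∈ E (g k) := fun k => ht3 (ρ k).1 (ρ k).2 k
  have hρmono : Monotone fun k => (ρ k).1 := monotone_nat_of_le_succ hρstep
  refine ⟨⋃ k, (ρ k).1, Set.subset_iUnion_of_subset 0 subset_rfl,
    Set.countable_iUnion (fun k => (ρ k).2), ?_⟩
  intro p hp
  obtain ⟨i, hi⟩ : ∃ i, g₀ i = p := hg₀ (Set.mem_insert_of_mem _ hp)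
  refine club_union_cofinal (hE p) _ hρmono fun m => ⟨Nat.pair i m + 1, ?_, ?_⟩
  · exact le_trans (Nat.right_le_pair i m) (Nat.le_succ _)
  · have : g (Nat.pair i m) = p := by simp [hg, Nat.unpair_pair, hi]
    rw [← this]
    exact hρmem (Nat.pair i m)

lemma isClubIn_diagonal (E : List κ → Set (Set κ)) (hE : ∀ p, IsClubIn (E p))
    (e : List κ → List κ) :
    IsClubIn {σ : Set κ | σ.Countable ∧ ∀ p : List κ, (∀ b ∈ p, b ∈ σ) →
      σ ∈ E p ∧ ∀ b ∈ e p, b ∈ σ} := by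
  classical
  refine ⟨fun σ h => h.1, ?_, ?_⟩
  · -- cofinal
    intro a ha
    have step : ∀ s : Set κ, s.Countable → ∃ τ : Set κ, τ.Countable ∧ s ⊆ τ ∧
        ∀ p : List κ, (∀ b ∈ p, b ∈ s) → τ ∈ E p ∧ ∀ b ∈ e p, b ∈ τ := by
      intro s hs
      have hI : {p : List κ | ∀ b ∈ p, b ∈ s}.Countable := countable_lists hs
      have ha' : (s ∪ ⋃ p ∈ {p : List κ | ∀ b ∈ p, b ∈ s}, {b | b ∈ e p}).Countable :=
        hs.union (hI.biUnion fun p _ => (List.finite_toSet (e p)).countable)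
      obtain ⟨τ, hsub, hτc, hτE⟩ := club_inter_cofinal E hE hI ha'
      refine ⟨τ, hτc, le_trans Set.subset_union_left hsub, fun p hp => ⟨hτE p hp, ?_⟩⟩
      intro b hb
      exact hsub (Set.mem_union_right _ (Set.mem_biUnion hp hb))
    choose t ht1 ht2 ht3 using step
    let ρ : ℕ → {s : Set κ // s.Countable} := fun k =>
      Nat.rec ⟨a, ha⟩ (fun _ ih => ⟨t ih.1 ih.2, ht1 ih.1 ih.2⟩) k
    have hρstep : ∀ k, (ρ k).1 ⊆ (ρ (k + 1)).1 := fun k => ht2 (ρ k).1 (ρ k).2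
    have hρmono : Monotone fun k => (ρ k).1 := monotone_nat_of_le_succ hρstep
    refine ⟨⋃ k, (ρ k).1, ⟨Set.countable_iUnion (fun k => (ρ k).2), ?_⟩,
      Set.subset_iUnion_of_subset 0 subset_rfl⟩
    intro p hp
    obtain ⟨N, hN⟩ := exists_stage hρmono p hp
    constructor
    · refine club_union_cofinal (hE p) _ hρmono fun m => ⟨max N m + 1, ?_, ?_⟩
      · exact le_trans (le_max_right N m) (Nat.le_succ _)
      · exact (ht3 (ρ (max N m)).1 (ρ (max N m)).2 p
          fun b hb => hρmono (le_max_left N m) (hN b hb)).1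
    · intro b hb
      exact Set.mem_iUnion.2 ⟨N + 1, (ht3 (ρ N).1 (ρ N).2 p hN).2 b hb⟩
  · -- closed under monotone unions
    intro s hs hmono
    refine ⟨Set.countable_iUnion fun n => (hs n).1, ?_⟩
    intro p hp
    obtain ⟨N, hN⟩ := exists_stage hmono p hp
    constructor
    · refine club_union_cofinal (hE p) s hmono fun m => ⟨max N m, le_max_right N m, ?_⟩
      exact ((hs (max N m)).2 p fun b hb => hmono (le_max_left N m) (hN b hb)).1
    · intro b hb
      exact Set.mem_iUnion.2 ⟨N, ((hs N).2 p hN).2 b hb⟩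

end Lemmas2

lemma meagre_union {X : Type*} [TopologicalSpace X] {s t : Set X}
    (hs : IsMeagre s) (ht : IsMeagre t) : IsMeagre (s ∪ t) := by
  rw [IsMeagre, Set.compl_union]
  exact Filter.inter_mem hs ht

/-- If `A ⊆ ω^ω` is weakly captured at `κ` in the sense of clubs (condition (2): for every
continuous `f : κ^ω → ω^ω` there is a dense set of conditions `p` below which `f ⁻¹' A` is
relatively meager on club many `σ`, or relatively comeager on club many `σ`), then `A`
admits a weak capturing term: taking `(p, τ) ∈ Ȧ` iff `f_τ ⁻¹' A ∩ σ^ω` is comeager below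
`p` in `σ^ω` for a club of `σ`, for club many `σ` and comeager many `g ∈ σ^ω` the
evaluation computes `A` correctly: `f_τ(g) ∈ A` iff some initial segment `p` of `g` has
`(p, τ) ∈ Ȧ`.  (Here `f = f_τ` is the continuous evaluation of the term `τ`.) -/
theorem weak_capturing_term_exists (κ : Type*) [Infinite κ] [TopologicalSpace κ]
    [DiscreteTopology κ] (A : Set (ℕ → ℕ))
    (h2 : ∀ f : (ℕ → κ) → (ℕ → ℕ), Continuous f →
      DenseCond {p : List κ |
        (∃ C : Set (Set κ), IsClubIn C ∧ ∀ σ ∈ C, MeagerBelowIn σ (f ⁻¹' A) p) ∨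
        (∃ C : Set (Set κ), IsClubIn C ∧ ∀ σ ∈ C, ComeagerBelowIn σ (f ⁻¹' A) p)})
    (f : (ℕ → κ) → ℕ → ℕ) (hf : Continuous f) :
    ∃ C : Set (Set κ), IsClubIn C ∧ ∀ σ ∈ C,
      IsMeagre {x : SeqIn σ | ¬ (f x.1 ∈ A ↔ ∃ n, ∃ C' : Set (Set κ), IsClubIn C' ∧
        ∀ σ' ∈ C', ComeagerBelowIn σ' (f ⁻¹' A) (seg x.1 n))} := by

  classical
  let Good : List κ → Prop := fun p =>
    ∃ C : Set (Set κ), IsClubIn C ∧ ∀ σ ∈ C, ComeagerBelowIn σ (f ⁻¹' A) p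
  let Mg : List κ → Prop := fun p =>
    ∃ C : Set (Set κ), IsClubIn C ∧ ∀ σ ∈ C, MeagerBelowIn σ (f ⁻¹' A) p
  choose e heD hee using h2 f hf
  have heD' : ∀ q : List κ, Mg (e q) ∨ Good (e q) := heD
  have hEex : ∀ p : List κ, ∃ S : Set (Set κ), IsClubIn S ∧
      (Good p → ∀ σ ∈ S, ComeagerBelowIn σ (f ⁻¹' A) p) ∧
      (¬ Good p → Mg p → ∀ σ ∈ S, MeagerBelowIn σ (f ⁻¹' A) p) := by
    intro p
    by_cases hg : Good p
    · obtain ⟨S, hS1, hS2⟩ := hg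
      exact ⟨S, hS1, fun _ => hS2, fun h _ => absurd ⟨S, hS1, hS2⟩ h⟩
    · by_cases hm : Mg p
      · obtain ⟨S, hS1, hS2⟩ := hm
        exact ⟨S, hS1, fun h => absurd h hg, fun _ _ => hS2⟩
      · exact ⟨{σ | σ.Countable}, isClubIn_countables, fun h => absurd h hg,
          fun _ h => absurd h hm⟩
  choose E hEclub hEgood hEmeag using hEex
  refine ⟨{σ : Set κ | σ.Countable ∧ ∀ p : List κ, (∀ b ∈ p, b ∈ σ) →
      σ ∈ E p ∧ ∀ b ∈ e p, b ∈ σ}, isClubIn_diagonal E hEclub e, ?_⟩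
  rintro σ ⟨hσc, hσp⟩
  haveI : Countable {p : List κ // ∀ b ∈ p, b ∈ σ} := (countable_lists hσc).to_subtype
  have hsegσ : ∀ (x : SeqIn σ) (n : ℕ), ∀ b ∈ seg x.1 n, b ∈ σ := by
    intro x n b hb
    obtain ⟨i, hi⟩ := List.mem_ofFn.1 hb
    rw [← hi]; exact x.2 i.1
  let U : Set (SeqIn σ) :=
    ⋃ (p : {p : List κ // ∀ b ∈ p, b ∈ σ}) (_ : Mg p.1 ∨ Good p.1), Subtype.val ⁻¹' Np p.1
  let T : Set (SeqIn σ) :=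
    ⋃ (p : {p : List κ // ∀ b ∈ p, b ∈ σ}) (_ : ¬ Good p.1 ∧ Mg p.1),
      Subtype.val ⁻¹' ((f ⁻¹' A) ∩ Np p.1)
  let G : Set (SeqIn σ) :=
    ⋃ (p : {p : List κ // ∀ b ∈ p, b ∈ σ}) (_ : Good p.1),
      Subtype.val ⁻¹' (Np p.1 \ (f ⁻¹' A))
  have hT : IsMeagre T := isMeagre_iUnion' fun p => isMeagre_iUnion' fun h =>
    hEmeag p.1 h.1 h.2 σ (hσp p.1 p.2).1
  have hG : IsMeagre G := isMeagre_iUnion' fun p => isMeagre_iUnion' fun h =>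
    hEgood p.1 h σ (hσp p.1 p.2).1
  have hUopen : IsOpen U := isOpen_iUnion fun p => isOpen_iUnion fun _ =>
    (isOpen_Np p.1).preimage continuous_subtype_val
  have hUdense : Dense U := by
    rw [dense_iff_inter_open]
    intro V hV hVne
    obtain ⟨x, hxV⟩ := hVne
    obtain ⟨W, hW, hWV⟩ := isOpen_induced_iff.1 hV
    have hxW : x.1 ∈ W := by rw [← hWV] at hxV; exact hxV
    obtain ⟨I, u, hu, hIW⟩ := isOpen_pi_iff.1 hW x.1 hxW
    set n : ℕ := I.sup id + 1 with hn
    have hIn : ∀ i ∈ I, i < n := fun i hi => Nat.lt_succ_of_le (Finset.le_sup (f := id) hi)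
    set q := seg x.1 n with hq
    set p := e q with hp
    have hqσ : ∀ b ∈ q, b ∈ σ := hsegσ x n
    have hpσ : ∀ b ∈ p, b ∈ σ := (hσp q hqσ).2
    have hqp : q <+: p := hee q
    have hqlen : q.length = n := seg_length x.1 n
    set y : ℕ → κ := fun i => if h : i < p.length then p[i] else x.1 i with hy
    have hyσ : ∀ i, y i ∈ σ := by
      intro i
      by_cases h : i < p.length
      · simp only [hy, dif_pos h]
        exact hpσ _ (List.getElem_mem h)
      · simp only [hy, dif_neg h]
        exact x.2 i
    have hyNp : y ∈ Np p := by
      intro i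
      simp only [hy, List.get_eq_getElem, dif_pos i.2]
    have hyW : y ∈ W := by
      apply hIW
      intro i hi
      have h1 : i < q.length := by rw [hqlen]; exact hIn i hi
      have h2 : i < p.length := lt_of_lt_of_le h1 hqp.length_le
      have hyx : y i = x.1 i := by
        simp only [hy, dif_pos h2]
        rw [← hqp.getElem h1]
        exact seg_getElem x.1 n i h1
      rw [hyx]
      exact (hu i hi).2
    refine ⟨⟨y, hyσ⟩, ?_, ?_⟩
    · rw [← hWV]; exact hyW
    · exact Set.mem_iUnion.2 ⟨⟨p, hpσ⟩, Set.mem_iUnion.2 ⟨heD' q, hyNp⟩⟩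
  have hUc : IsMeagre Uᶜ := by
    rw [IsMeagre, compl_compl]
    exact residual_of_dense_open hUopen hUdense
  refine IsMeagre.mono ?_ (meagre_union hUc (meagre_union hT hG))
  intro x hx
  simp only [Set.mem_setOf_eq] at hx
  by_cases hr : ∃ n, Good (seg x.1 n)
  · obtain ⟨n, hn⟩ := hr
    have hA : f x.1 ∉ A := fun hA => hx (iff_of_true hA ⟨n, hn⟩)
    exact Set.mem_union_right _ (Set.mem_union_right _
      (Set.mem_iUnion.2 ⟨⟨seg x.1 n, hsegσ x n⟩, Set.mem_iUnion.2 ⟨hn, mem_Np_seg x.1 n, hA⟩⟩))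
  · have hA : f x.1 ∈ A := by
      by_contra hA
      exact hx (iff_of_false hA hr)
    by_cases hU : x ∈ U
    · obtain ⟨p, hpU⟩ := Set.mem_iUnion.1 hU
      obtain ⟨hpD, hNp⟩ := Set.mem_iUnion.1 hpU
      have hseg : seg x.1 p.1.length = p.1 := seg_eq_of_mem_Np hNp
      have hng : ¬ Good p.1 := fun hg => hr ⟨p.1.length, by rw [hseg]; exact hg⟩
      have hm : Mg p.1 := hpD.resolve_right hng
      exact Set.mem_union_right _ (Set.mem_union_left _
        (Set.mem_iUnion.2 ⟨p, Set.mem_iUnion.2 ⟨⟨hng, hm⟩, hA, hNp⟩⟩))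
    · exact Set.mem_union_left _ hU
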